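/- Let F be a free group, and let g, h ∈ F with g ≠ 1. If g commutes with its conjugate hgh⁻¹, then g commutes with h. -/

import Mathlib

namespace Stmt12Aux
open FreeGroup

section Words
variable {α : Type*} [DecidableEq α]

lemma toWord_single_mul (i : α) (s : Bool) (c : FreeGroup α)
    (h : c.toWord.head? ≠ some (i, !s)) :
    (FreeGroup.mk [(i,s)] * c).toWord = (i,s) :: c.toWord := by
  conv_lhs => rw [← mk_toWord (x := c)]
  rw [mul_mk, toWord_mk, List.singleton_append, reduce.cons, reduce_toWord]
  cases hL : c.toWord with
  | nil => rfl
  | cons hd tl =>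
    rw [hL] at h
    simp only []
    rw [if_neg]
    rintro ⟨h1, h2⟩
    apply h
    simp only [List.head?_cons, Option.some.injEq]
    obtain ⟨a, b⟩ := hd
    simp only at h1 h2
    subst h1; rw [h2]; simp

lemma toWord_single_mul_cancel (i : α) (s : Bool) (c : FreeGroup α)
    (h : c.toWord.head? = some (i, !s)) :
    (FreeGroup.mk [(i,s)] * c).toWord = c.toWord.tail := by
  conv_lhs => rw [← mk_toWord (x := c)]
  rw [mul_mk, toWord_mk, List.singleton_append, reduce.cons, reduce_toWord]
  cases hL : c.toWord with
  | nil => simp [hL] at h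
  | cons hd tl =>
    rw [hL] at h
    simp only [List.head?_cons, Option.some.injEq] at h
    subst h
    simp

lemma list_rotate {β : Type*} (a : β) :
    ∀ (L : List β), a :: L = L ++ [a] → L = List.replicate L.length a
  | [], _ => rfl
  | b :: M, h => by
    simp only [List.cons_append, List.cons.injEq] at h
    obtain ⟨rfl, h2⟩ := h
    have := list_rotate a M h2
    simp [List.length_cons, List.replicate_succ, ← this]

lemma mk_replicate (i : α) (n : ℕ) :
    FreeGroup.mk (List.replicate n (i, true)) = of i ^ n := by
  apply toWord_injective
  rw [toWord_of_pow, toWord_mk, reduce_replicate]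

omit [DecidableEq α] in
lemma of_eq_single_true (i : α) : of i = FreeGroup.mk [(i, true)] := rfl

omit [DecidableEq α] in
lemma single_false_eq (i : α) : FreeGroup.mk [(i, false)] = (of i)⁻¹ := by
  rw [of_eq_single_true, inv_mk]; rfl

/-- Key combinatorial lemma: the centralizer of a generator is the cyclic group
on that generator. -/
lemma commOfGen (i : α) : ∀ (n : ℕ) (c : FreeGroup α), c.toWord.length ≤ n →
    of i * c = c * of i → ∃ k : ℤ, c = of i ^ k := by
  intro n
  induction n with
  | zero =>
    intro c hlen _
    refine ⟨0, ?_⟩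
    rw [zpow_zero, ← toWord_eq_nil_iff, ← List.length_eq_zero_iff]
    omega
  | succ n ih =>
    intro c hlen comm
    by_cases ha : c.toWord.head? = some (i, false)
    · -- cancellation on the left
      set c' := FreeGroup.mk [(i, true)] * c with hc'
      have ht : c'.toWord = c.toWord.tail := by
        apply toWord_single_mul_cancel
        simpa using ha
      have hlen' : c'.toWord.length ≤ n := by
        rw [ht]
        rcases hL : c.toWord with _ | ⟨hd, tl⟩
        · simp
        · rw [hL] at hlen; simp only [List.length_cons] at hlen; simpa using by omega
      have comm' : of i * c' = c' * of i := by
        rw [hc', ← of_eq_single_true]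
        rw [mul_assoc, comm, ← mul_assoc]
      obtain ⟨k, hk⟩ := ih c' hlen' comm'
      refine ⟨k - 1, ?_⟩
      have : c = (of i)⁻¹ * c' := by
        rw [hc', ← of_eq_single_true, ← mul_assoc, inv_mul_cancel, one_mul]
      rw [this, hk, ← zpow_neg_one, ← zpow_add, neg_add_eq_sub]
    · by_cases hb : (c⁻¹).toWord.head? = some (i, true)
      · -- cancellation on the right
        set d := c⁻¹ with hd
        set c' := FreeGroup.mk [(i, false)] * d with hc'
        have ht : c'.toWord = d.toWord.tail := by
          apply toWord_single_mul_cancel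
          simpa using hb
        have hlen' : c'.toWord.length ≤ n := by
          rw [ht]
          have : d.toWord.length = c.toWord.length := by
            rw [hd, toWord_inv, invRev_length]
          rcases hL : d.toWord with _ | ⟨hd2, tl⟩
          · simp
          · rw [hL] at this
            simp only [List.length_cons] at this
            simpa using by omega
        have commd : of i * d = d * of i := by
          rw [hd]
          have := congrArg (fun z => z⁻¹) comm
          simp only [mul_inv_rev] at this
          calc of i * c⁻¹ = (of i * c⁻¹ * (of i)⁻¹) * of i := by group
            _ = (c⁻¹ * of i * (of i)⁻¹) * of i := by
                congr 1
                rw [mul_assoc]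
                rw [show c⁻¹ * (of i)⁻¹ = (of i)⁻¹ * c⁻¹ from this]
                group
            _ = c⁻¹ * of i := by group
        have comm' : of i * c' = c' * of i := by
          rw [hc', single_false_eq]
          calc of i * ((of i)⁻¹ * d) = d := by group
            _ = (of i)⁻¹ * (of i * d) := by group
            _ = (of i)⁻¹ * (d * of i) := by rw [commd]
            _ = (of i)⁻¹ * d * of i := by group
        obtain ⟨k, hk⟩ := ih c' hlen' comm'
        refine ⟨-k - 1, ?_⟩
        have hdk : d = of i * c' := by
          rw [hc', single_false_eq]; group
        have : c = c'⁻¹ * (of i)⁻¹ := by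
          rw [← mul_inv_rev, ← hdk, hd, inv_inv]
        rw [this, hk, ← zpow_neg, ← zpow_neg_one, ← zpow_add]
        ring_nf
      · -- no cancellation: rotation case
        have e1 : (of i * c).toWord = (i, true) :: c.toWord := by
          rw [of_eq_single_true]
          apply toWord_single_mul
          simpa using ha
        have e2 : (FreeGroup.mk [(i, false)] * c⁻¹).toWord = (i, false) :: (c⁻¹).toWord := by
          apply toWord_single_mul
          simpa using hb
        have e3 : c * of i = (FreeGroup.mk [(i, false)] * c⁻¹)⁻¹ := by
          rw [mul_inv_rev, inv_inv, single_false_eq, inv_inv]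
        have e4 : (c * of i).toWord = c.toWord ++ [(i, true)] := by
          rw [e3, toWord_inv, e2, toWord_inv]
          show FreeGroup.invRev ((i,false) :: invRev c.toWord) = _
          rw [FreeGroup.invRev, List.map_cons, List.reverse_cons, ← FreeGroup.invRev, invRev_invRev]
          rfl
        have e5 : (i, true) :: c.toWord = c.toWord ++ [(i, true)] := by
          rw [← e1, ← e4, comm]
        have e6 := list_rotate _ _ e5
        refine ⟨(c.toWord.length : ℤ), ?_⟩
        rw [zpow_natCast, ← mk_replicate, ← e6, mk_toWord]

end Words

section Structure
variable {α : Type*}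

/-- The abelianization map to finitely supported functions. -/
noncomputable def ab : FreeGroup α →* Multiplicative (α →₀ ℤ) :=
  FreeGroup.lift fun a => Multiplicative.ofAdd (Finsupp.single a 1)

lemma ab_of (a : α) : ab (of a) = Multiplicative.ofAdd (Finsupp.single a 1) :=
  FreeGroup.lift_apply_of

lemma ab_of_zpow (a : α) (k : ℤ) :
    ab (of a ^ k) = Multiplicative.ofAdd (Finsupp.single a k) := by
  rw [map_zpow, ab_of, ← ofAdd_zsmul, Finsupp.smul_single, smul_eq_mul, mul_one]

lemma eq_of_pow_eq_pow (i j : α) (k l : ℤ) (hk : k ≠ 0)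
    (h : (of i : FreeGroup α) ^ k = of j ^ l) : i = j := by
  by_contra hij
  have := congrArg ab h
  rw [ab_of_zpow, ab_of_zpow] at this
  have h2 : (Finsupp.single i k : α →₀ ℤ) = Finsupp.single j l := by
    exact_mod_cast this
  have := congrArg (fun f => f i) h2
  simp [Finsupp.single_apply, hij, Ne.symm hij] at this
  exact hk this

lemma subsingleton_freeGroup [IsEmpty α] (x : FreeGroup α) : x = 1 := by
  classical
  rw [← toWord_eq_nil_iff]
  rcases h : x.toWord with _ | ⟨⟨a, b⟩, tl⟩
  · rfl
  · exact (IsEmpty.false a).elim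

lemma powAll [Subsingleton α] (i₀ : α) (w : FreeGroup α) : ∃ n : ℤ, w = of i₀ ^ n := by
  induction w using FreeGroup.induction_on with
  | C1 => exact ⟨0, by simp⟩
  | of a => exact ⟨1, by rw [Subsingleton.elim a i₀, zpow_one]⟩
  | inv_of a ha => obtain ⟨n, hn⟩ := ha; exact ⟨-n, by rw [zpow_neg, ← hn]⟩
  | mul a b ha hb =>
    obtain ⟨n, hn⟩ := ha; obtain ⟨m, hm⟩ := hb
    exact ⟨n + m, by rw [hn, hm, zpow_add]⟩

lemma commAll [Subsingleton α] (p q : FreeGroup α) : p * q = q * p := by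
  rcases isEmpty_or_nonempty α with hemp | ⟨⟨i₀⟩⟩
  · rw [subsingleton_freeGroup p, subsingleton_freeGroup q]
  · obtain ⟨n, hn⟩ := powAll i₀ p
    obtain ⟨m, hm⟩ := powAll i₀ q
    rw [hn, hm, ← zpow_add, ← zpow_add, add_comm]

lemma infinite_freeGroup [Nonempty α] : Infinite (FreeGroup α) := by
  classical
  obtain ⟨i⟩ := ‹Nonempty α›
  refine Infinite.of_injective (fun n : ℕ => of i ^ n) fun m n h => ?_
  have := congrArg FreeGroup.toWord h
  rw [toWord_of_pow, toWord_of_pow] at this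
  simpa using congrArg List.length this

/-- Free groups are torsion-free. -/
lemma torsionFree (x : FreeGroup α) (n : ℤ) (hn : n ≠ 0) (h : x ^ n = 1) : x = 1 := by
  have hfin : IsOfFinOrder x := by
    refine isOfFinOrder_iff_pow_eq_one.mpr ⟨n.natAbs, by omega, ?_⟩
    rcases Int.natAbs_eq n with he | he
    · rw [← zpow_natCast, ← he, h]
    · rw [← zpow_natCast, ← neg_neg (n.natAbs : ℤ), ← he, zpow_neg, h, inv_one]
  have hfin2 : Finite ↥(Subgroup.zpowers x) := hfin.finite_zpowers.to_subtype
  set H := Subgroup.zpowers x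
  let e := IsFreeGroup.toFreeGroup ↥H
  rcases isEmpty_or_nonempty (IsFreeGroup.Generators ↥H) with hemp | hne
  · have : (⟨x, Subgroup.mem_zpowers x⟩ : ↥H) = 1 := by
      apply e.injective
      rw [_root_.map_one]
      exact subsingleton_freeGroup _
    exact congrArg Subtype.val this
  · exfalso
    have : Infinite (FreeGroup (IsFreeGroup.Generators ↥H)) := infinite_freeGroup
    have : Infinite ↥H := Infinite.of_injective e.symm e.symm.injective
    exact not_finite ↥H

/-- An abelian subgroup of a free group is cyclic. -/
lemma cyc (H : Subgroup (FreeGroup α)) (hab : ∀ a ∈ H, ∀ b ∈ H, a * b = b * a) :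
    ∃ t : ↥H, ∀ x : ↥H, ∃ n : ℤ, x = t ^ n := by
  classical
  let e := IsFreeGroup.toFreeGroup ↥H
  haveI : Subsingleton (IsFreeGroup.Generators ↥H) := by
    constructor; intro i j
    have h1 : e.symm (of i) * e.symm (of j) = e.symm (of j) * e.symm (of i) := by
      have := hab _ (e.symm (of i)).2 _ (e.symm (of j)).2
      exact Subtype.ext (by simpa using this)
    have h2 : of i * of j = (of j : FreeGroup (IsFreeGroup.Generators ↥H)) * of i := by
      have := congrArg e h1
      simpa using this
    obtain ⟨k, hk⟩ := commOfGen i (of j).toWord.length (of j) le_rfl h2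
    exact (eq_of_pow_eq_pow j i 1 k one_ne_zero (by rw [zpow_one, hk])).symm
  rcases isEmpty_or_nonempty (IsFreeGroup.Generators ↥H) with hemp | ⟨⟨i₀⟩⟩
  · refine ⟨1, fun x => ⟨0, ?_⟩⟩
    rw [zpow_zero]
    apply e.injective
    rw [_root_.map_one]
    exact subsingleton_freeGroup _
  · refine ⟨e.symm (of i₀), fun x => ?_⟩
    obtain ⟨n, hn⟩ := powAll i₀ (e x)
    exact ⟨n, by rw [← map_zpow, ← hn, e.symm_apply_apply]⟩

/-- Commutative transitivity of free groups. -/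
lemma commTrans (x a b : FreeGroup α) (hx : x ≠ 1)
    (ha : a * x = x * a) (hb : b * x = x * b) : a * b = b * a := by
  classical
  set C := Subgroup.centralizer ({x} : Set (FreeGroup α)) with hC
  have hxC : x ∈ C := Subgroup.mem_centralizer_singleton_iff.mpr rfl
  have Cab : ∀ u ∈ C, ∀ v ∈ C, u * v = v * u := by
    intro u hu v hv
    let e := IsFreeGroup.toFreeGroup ↥C
    set z := e ⟨x, hxC⟩ with hz
    have hz1 : z ≠ 1 := by
      intro h1
      apply hx
      have := e.injective (h1.trans (_root_.map_one e).symm)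
      exact congrArg Subtype.val this
    have hcent : ∀ w : FreeGroup (IsFreeGroup.Generators ↥C), w * z = z * w := by
      intro w
      obtain ⟨u', rfl⟩ := e.surjective w
      rw [hz, ← _root_.map_mul, ← _root_.map_mul]
      congr 1
      apply Subtype.ext
      have h' := Subgroup.mem_centralizer_singleton_iff.mp u'.2
      simpa using h'
    haveI : Subsingleton (IsFreeGroup.Generators ↥C) := by
      constructor; intro i j
      obtain ⟨k, hk⟩ := commOfGen i z.toWord.length z le_rfl (hcent (of i))
      obtain ⟨l, hl⟩ := commOfGen j z.toWord.length z le_rfl (hcent (of j))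
      have hk0 : k ≠ 0 := by
        intro h0
        rw [h0, zpow_zero] at hk
        exact hz1 hk
      exact eq_of_pow_eq_pow i j k l hk0 (by rw [← hk, ← hl])
    have h3 := commAll (e ⟨u, hu⟩) (e ⟨v, hv⟩)
    rw [← _root_.map_mul, ← _root_.map_mul] at h3
    have h4 := e.injective h3
    exact Subtype.ext_iff.mp h4
  exact Cab a (Subgroup.mem_centralizer_singleton_iff.mpr ha) b
    (Subgroup.mem_centralizer_singleton_iff.mpr hb)

end Structure
end Stmt12Aux

open Stmt12Aux in
/-- In a free group, if `g ≠ 1` commutes with its conjugate `h * g * h⁻¹`, then `g`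
commutes with `h`. -/
theorem stmt12 {α : Type*} (g h : FreeGroup α) (hg : g ≠ 1)
    (hc : g * (h * g * h⁻¹) = (h * g * h⁻¹) * g) :
    g * h = h * g := by
  classical
  have hk1 : h * g * h⁻¹ ≠ 1 := by
    intro h1
    apply hg
    have : g = h⁻¹ * (h * g * h⁻¹) * h := by group
    rw [this, h1]; group
  set C := Subgroup.centralizer ({g} : Set (FreeGroup α)) with hCdef
  have Cab : ∀ u ∈ C, ∀ v ∈ C, u * v = v * u := by
    intro u hu v hv
    exact commTrans g u v hg (Subgroup.mem_centralizer_singleton_iff.mp hu)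
      (Subgroup.mem_centralizer_singleton_iff.mp hv)
  obtain ⟨t, ht⟩ := cyc C Cab
  have hgC : g ∈ C := Subgroup.mem_centralizer_singleton_iff.mpr rfl
  have hkC : h * g * h⁻¹ ∈ C := Subgroup.mem_centralizer_singleton_iff.mpr hc.symm
  have ht1 : (t : FreeGroup α) ≠ 1 := by
    intro h1
    obtain ⟨a, ha⟩ := ht ⟨g, hgC⟩
    apply hg
    have h2 := congrArg Subtype.val ha
    push_cast at h2
    rw [h2, h1, one_zpow]
  have stab : ∀ u : FreeGroup α, u ∈ C → h * u * h⁻¹ ∈ C := by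
    intro u hu
    rw [Subgroup.mem_centralizer_singleton_iff]
    have hug := Subgroup.mem_centralizer_singleton_iff.mp hu
    have h1 : (h * u * h⁻¹) * (h * g * h⁻¹) = (h * g * h⁻¹) * (h * u * h⁻¹) := by
      calc (h * u * h⁻¹) * (h * g * h⁻¹) = h * (u * g) * h⁻¹ := by group
        _ = h * (g * u) * h⁻¹ := by rw [hug]
        _ = (h * g * h⁻¹) * (h * u * h⁻¹) := by group
    exact commTrans (h * g * h⁻¹) (h * u * h⁻¹) g hk1 h1 hc
  have stab' : ∀ u : FreeGroup α, u ∈ C → h⁻¹ * u * h ∈ C := by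
    intro u hu
    rw [Subgroup.mem_centralizer_singleton_iff]
    have h2 : u * (h * g * h⁻¹) = (h * g * h⁻¹) * u := Cab u hu _ hkC
    calc (h⁻¹ * u * h) * g = h⁻¹ * (u * (h * g * h⁻¹)) * h := by group
      _ = h⁻¹ * ((h * g * h⁻¹) * u) * h := by rw [h2]
      _ = g * (h⁻¹ * u * h) := by group
  obtain ⟨d, hd⟩ := ht ⟨h * (t : FreeGroup α) * h⁻¹, stab _ t.2⟩
  obtain ⟨b, hb⟩ := ht ⟨h⁻¹ * (t : FreeGroup α) * h, stab' _ t.2⟩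
  have hd' : h * (t : FreeGroup α) * h⁻¹ = (t : FreeGroup α) ^ d := by
    have := congrArg Subtype.val hd; push_cast at this; exact this
  have hb' : h⁻¹ * (t : FreeGroup α) * h = (t : FreeGroup α) ^ b := by
    have := congrArg Subtype.val hb; push_cast at this; exact this
  have hbd : (t : FreeGroup α) = (t : FreeGroup α) ^ (d * b) := by
    calc (t : FreeGroup α) = h⁻¹ * (h * (t : FreeGroup α) * h⁻¹) * h := by group
      _ = h⁻¹ * (t : FreeGroup α) ^ d * h := by rw [hd']
      _ = (h⁻¹ * (t : FreeGroup α) * h) ^ d := by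
          rw [show h⁻¹ * (t : FreeGroup α) * h = h⁻¹ * (t : FreeGroup α) * h⁻¹⁻¹ by rw [inv_inv],
            conj_zpow, inv_inv]
      _ = ((t : FreeGroup α) ^ b) ^ d := by rw [hb']
      _ = (t : FreeGroup α) ^ (d * b) := by rw [← zpow_mul, mul_comm]
  have hdb1 : d * b = 1 := by
    by_contra hne
    apply ht1
    refine torsionFree _ (d * b - 1) (by omega) ?_
    rw [zpow_sub, zpow_one, ← hbd, mul_inv_cancel]
  have hdu : d = 1 ∨ d = -1 := Int.isUnit_iff.mp (IsUnit.of_mul_eq_one b hdb1)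
  obtain ⟨a, ha⟩ := ht ⟨g, hgC⟩
  have ha' : g = (t : FreeGroup α) ^ a := by
    have := congrArg Subtype.val ha; push_cast at this; exact this
  have key : h * g * h⁻¹ = (t : FreeGroup α) ^ (d * a) := by
    calc h * g * h⁻¹ = h * (t : FreeGroup α) ^ a * h⁻¹ := by rw [ha']
      _ = (h * (t : FreeGroup α) * h⁻¹) ^ a := by rw [conj_zpow]
      _ = ((t : FreeGroup α) ^ d) ^ a := by rw [hd']
      _ = (t : FreeGroup α) ^ (d * a) := by rw [← zpow_mul, mul_comm]
  rcases hdu with rfl | rfl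
  · have heq : h * g * h⁻¹ = g := by rw [key, one_mul, ← ha']
    conv_lhs => rw [← heq]
    group
  · have hinv : h * g * h⁻¹ = g⁻¹ := by
      rw [key, neg_one_mul, zpow_neg, ← ha']
    have h2g : g * (h * h) = (h * h) * g := by
      have : (h * h) * g * (h * h)⁻¹ = g := by
        calc (h * h) * g * (h * h)⁻¹ = h * (h * g * h⁻¹) * h⁻¹ := by group
          _ = h * g⁻¹ * h⁻¹ := by rw [hinv]
          _ = (h * g * h⁻¹)⁻¹ := by group
          _ = g := by rw [hinv, inv_inv]
      calc g * (h * h) = ((h * h) * g * (h * h)⁻¹) * (h * h) := by rw [this]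
        _ = (h * h) * g := by group
    by_cases hh : h * h = 1
    · have : h = 1 := by
        refine torsionFree h 2 (by omega) ?_
        rw [show (2 : ℤ) = 1 + 1 by rfl, zpow_add, zpow_one, hh]
      rw [this]; group
    · exact commTrans (h * h) g h hh h2g (by group)
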